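/- In any group, suppose b₁, …, b_l (l ≥ 3) satisfy the braid relations Br(b_i, b_{i+1}) for consecutive indices (cyclically, indices mod l) and commutation relations Co(b_i, b_j) for non-consecutive indices. Then the relation Co(b₁, b_l^{b_{l-1}⋯b₂}) is equivalent to the relation Co(b₂, b₁^{b_l b_{l-1}⋯b₃}). -/
import Mathlib

private theorem comm_conj_aux {G : Type*} [Group G] (g a x a' x' : G)
    (ha : g * a * g⁻¹ = a') (hx : g * x * g⁻¹ = x') :
    (a * x = x * a) ↔ (a' * x' = x' * a') := by
  subst ha; subst hx
  constructor
  · intro h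
    calc (g*a*g⁻¹) * (g*x*g⁻¹) = g*(a*x)*g⁻¹ := by group
      _ = g*(x*a)*g⁻¹ := by rw [h]
      _ = (g*x*g⁻¹) * (g*a*g⁻¹) := by group
  · intro h
    have h2 : g*(a*x)*g⁻¹ = g*(x*a)*g⁻¹ := by
      calc g*(a*x)*g⁻¹ = (g*a*g⁻¹)*(g*x*g⁻¹) := by group
        _ = (g*x*g⁻¹)*(g*a*g⁻¹) := h
        _ = g*(x*a)*g⁻¹ := by group
    exact mul_left_cancel (mul_right_cancel h2)

theorem cycle_potential_relation_rotation {G : Type*} [Group G] (l : ℕ) (hl : 3 ≤ l)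
    (b : ZMod l → G)
    (hbr : ∀ i : ZMod l, b i * b (i + 1) * b i = b (i + 1) * b i * b (i + 1))
    (hco : ∀ i j : ZMod l, i ≠ j → i + 1 ≠ j → j + 1 ≠ i → b i * b j = b j * b i) :
    -- `c = b_{l-1} ⋯ b₂` and `d = b_l b_{l-1} ⋯ b₃` (with `b₁,…,b_l` indexed by `0,…,l-1`)
    (letI c : G := ((List.range (l - 2)).map (fun k => b ((l - 2 - k : ℕ) : ZMod l))).prod
     b 0 * (c⁻¹ * b ((l - 1 : ℕ) : ZMod l) * c) = (c⁻¹ * b ((l - 1 : ℕ) : ZMod l) * c) * b 0) ↔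
    (letI d : G := ((List.range (l - 2)).map (fun k => b ((l - 1 - k : ℕ) : ZMod l))).prod
     b 1 * (d⁻¹ * b 0 * d) = (d⁻¹ * b 0 * d) * b 1) := by
  haveI : NeZero l := ⟨by omega⟩
  set f : ℕ → G := fun k => b ((l - 2 - k : ℕ) : ZMod l) with hf
  set g : ℕ → G := fun k => b ((l - 1 - k : ℕ) : ZMod l) with hg
  set cP : G := ((List.range (l - 2)).map f).prod with hcP
  set dP : G := ((List.range (l - 2)).map g).prod with hdP
  set bL : G := b ((l - 1 : ℕ) : ZMod l) with hbLdef
  show (b 0 * (cP⁻¹ * bL * cP) = (cP⁻¹ * bL * cP) * b 0) ↔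
    (b 1 * (dP⁻¹ * b 0 * dP) = (dP⁻¹ * b 0 * dP) * b 1)
  -- cast helper
  have hne : ∀ m n : ℕ, m < l → n < l → m ≠ n → (m : ZMod l) ≠ (n : ZMod l) := by
    intro m n hm hn hmn h
    apply hmn
    have := congrArg ZMod.val h
    rwa [ZMod.val_cast_of_lt hm, ZMod.val_cast_of_lt hn] at this
  -- braid relations we need
  have hbr01 : b 0 * b 1 * b 0 = b 1 * b 0 * b 1 := by
    have h := hbr 0; rwa [zero_add] at h
  have hL1 : ((l - 1 : ℕ) : ZMod l) + 1 = 0 := by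
    have : ((l - 1 : ℕ) : ZMod l) + 1 = ((l - 1 + 1 : ℕ) : ZMod l) := by push_cast; ring
    rw [this, show l - 1 + 1 = l by omega, ZMod.natCast_self]
  have hbrL : bL * b 0 * bL = b 0 * bL * b 0 := by
    have h := hbr ((l - 1 : ℕ) : ZMod l); rwa [hL1] at h
  -- decomposition of cP : cP = E * b 1
  have hr2 : List.range (l - 2) = List.range (l - 3) ++ [l - 3] := by
    rw [show l - 2 = (l - 3) + 1 by omega, List.range_succ]
  set E : G := ((List.range (l - 3)).map f).prod with hE
  have hf3 : f (l - 3) = b 1 := by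
    simp only [hf]
    rw [show l - 2 - (l - 3) = 1 by omega, Nat.cast_one]
  have hcE : cP = E * b 1 := by
    rw [hcP, hr2, List.map_append, List.prod_append, List.map_singleton,
      List.prod_singleton, hf3, hE]
  -- b 0 commutes with E
  have hcomE : Commute (b 0) E := by
    apply Commute.list_prod_right
    intro x hx
    simp only [List.mem_map, List.mem_range] at hx
    obtain ⟨k, hk, rfl⟩ := hx
    simp only [hf]
    have h2 : 2 ≤ l - 2 - k := by omega
    have hlt : l - 2 - k < l := by omega
    have c1 : (0 : ZMod l) ≠ ((l - 2 - k : ℕ) : ZMod l) := by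
      rw [show (0 : ZMod l) = ((0 : ℕ) : ZMod l) by norm_num]
      exact hne 0 _ (by omega) hlt (by omega)
    have c2 : (0 : ZMod l) + 1 ≠ ((l - 2 - k : ℕ) : ZMod l) := by
      rw [zero_add, show (1 : ZMod l) = ((1 : ℕ) : ZMod l) by norm_num]
      exact hne 1 _ (by omega) hlt (by omega)
    have c3 : ((l - 2 - k : ℕ) : ZMod l) + 1 ≠ (0 : ZMod l) := by
      rw [show ((l - 2 - k : ℕ) : ZMod l) + 1 = ((l - 2 - k + 1 : ℕ) : ZMod l) by push_cast; ring,
        show (0 : ZMod l) = ((0 : ℕ) : ZMod l) by norm_num]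
      exact hne _ 0 (by omega) (by omega) (by omega)
    exact hco 0 _ c1 c2 c3
  -- key conjugation identity for cP
  have hc0 : cP⁻¹ * b 0 * cP = (b 1)⁻¹ * b 0 * b 1 := by
    rw [hcE]
    have hEb : E⁻¹ * b 0 * E = b 0 := by
      rw [mul_assoc, hcomE.eq, ← mul_assoc, inv_mul_cancel, one_mul]
    calc (E * b 1)⁻¹ * b 0 * (E * b 1) = (b 1)⁻¹ * (E⁻¹ * b 0 * E) * b 1 := by group
      _ = (b 1)⁻¹ * b 0 * b 1 := by rw [hEb]
  -- dP * b 1 = bL * cP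
  have hdc : dP * b 1 = bL * cP := by
    have hg2 : g (l - 2) = b 1 := by
      simp only [hg]
      rw [show l - 1 - (l - 2) = 1 by omega, Nat.cast_one]
    have hg0 : g 0 = bL := by
      simp only [hg, hbLdef, Nat.sub_zero]
    calc dP * b 1 = ((List.range (l - 2)).map g).prod * g (l - 2) := by rw [hg2]
      _ = ((List.range (l - 1)).map g).prod := by
          rw [show l - 1 = (l - 2) + 1 by omega, List.range_succ, List.map_append,
            List.prod_append, List.map_singleton, List.prod_singleton]
      _ = bL * cP := by
          rw [show l - 1 = (l - 2) + 1 by omega, List.range_succ_eq_map, List.map_cons,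
            List.map_map, hg0, hcP, List.prod_cons]
          congr 1
          congr 1
          apply List.map_congr_left
          intro k _
          simp only [Function.comp, hg, hf, Nat.succ_eq_add_one]
          congr 2
          omega
  have hd' : dP = bL * cP * (b 1)⁻¹ := by
    rw [← hdc]; group
  -- e1 : cP * b 0 * cP⁻¹ = b 0⁻¹ * v * b 0  with v = cP * b 1 * cP⁻¹
  have hc0' : b 0 * cP = cP * ((b 1)⁻¹ * b 0 * b 1) := by
    rw [← hc0]; group
  have key : b 0 * (cP * b 0 * cP⁻¹) = (cP * b 1 * cP⁻¹) * b 0 := by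
    calc b 0 * (cP * b 0 * cP⁻¹) = (b 0 * cP) * b 0 * cP⁻¹ := by group
      _ = (cP * ((b 1)⁻¹ * b 0 * b 1)) * b 0 * cP⁻¹ := by rw [hc0']
      _ = cP * (b 1)⁻¹ * (b 0 * b 1 * b 0) * cP⁻¹ := by group
      _ = cP * (b 1)⁻¹ * (b 1 * b 0 * b 1) * cP⁻¹ := by rw [hbr01]
      _ = cP * b 1 * ((b 1)⁻¹ * b 0 * b 1) * cP⁻¹ := by group
      _ = cP * b 1 * (cP⁻¹ * b 0 * cP) * cP⁻¹ := by rw [hc0]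
      _ = (cP * b 1 * cP⁻¹) * b 0 := by group
  have e1 : cP * b 0 * cP⁻¹ = (b 0)⁻¹ * ((cP * b 1 * cP⁻¹) * b 0) := by
    rw [eq_inv_mul_iff_mul_eq]; exact key
  have e1' : cP * b 0 * cP⁻¹ = (b 0)⁻¹ * (cP * b 1 * cP⁻¹) * b 0 := by
    rw [e1]; group
  -- e2 : b 0 * bL * b 0⁻¹ = bL⁻¹ * b 0 * bL
  have e2 : b 0 * bL * (b 0)⁻¹ = bL⁻¹ * b 0 * bL := by
    calc b 0 * bL * (b 0)⁻¹ = bL⁻¹ * (bL * b 0 * bL) * bL⁻¹ * (bL * (b 0)⁻¹) := by group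
      _ = bL⁻¹ * (b 0 * bL * b 0) * bL⁻¹ * (bL * (b 0)⁻¹) := by rw [hbrL]
      _ = bL⁻¹ * b 0 * bL := by group
  -- e3 : dP * b 1 * dP⁻¹ = bL * v * bL⁻¹
  have e3 : dP * b 1 * dP⁻¹ = bL * (cP * b 1 * cP⁻¹) * bL⁻¹ := by
    rw [hd']; group
  -- chain of equivalences
  have I1 : (b 0 * (cP⁻¹ * bL * cP) = (cP⁻¹ * bL * cP) * b 0) ↔
      (((b 0)⁻¹ * (cP * b 1 * cP⁻¹) * b 0) * bL = bL * ((b 0)⁻¹ * (cP * b 1 * cP⁻¹) * b 0)) :=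
    comm_conj_aux cP (b 0) (cP⁻¹ * bL * cP) _ bL e1' (by group)
  have I2 : (((b 0)⁻¹ * (cP * b 1 * cP⁻¹) * b 0) * bL = bL * ((b 0)⁻¹ * (cP * b 1 * cP⁻¹) * b 0)) ↔
      ((cP * b 1 * cP⁻¹) * (bL⁻¹ * b 0 * bL) = (bL⁻¹ * b 0 * bL) * (cP * b 1 * cP⁻¹)) :=
    comm_conj_aux (b 0) _ bL (cP * b 1 * cP⁻¹) (bL⁻¹ * b 0 * bL) (by group) e2
  have I3 : ((cP * b 1 * cP⁻¹) * (bL⁻¹ * b 0 * bL) = (bL⁻¹ * b 0 * bL) * (cP * b 1 * cP⁻¹)) ↔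
      ((bL * (cP * b 1 * cP⁻¹) * bL⁻¹) * b 0 = b 0 * (bL * (cP * b 1 * cP⁻¹) * bL⁻¹)) :=
    comm_conj_aux bL _ _ (bL * (cP * b 1 * cP⁻¹) * bL⁻¹) (b 0) rfl (by group)
  have J1 : (b 1 * (dP⁻¹ * b 0 * dP) = (dP⁻¹ * b 0 * dP) * b 1) ↔
      ((bL * (cP * b 1 * cP⁻¹) * bL⁻¹) * b 0 = b 0 * (bL * (cP * b 1 * cP⁻¹) * bL⁻¹)) :=
    comm_conj_aux dP (b 1) (dP⁻¹ * b 0 * dP) _ (b 0) e3 (by group)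
  exact ((I1.trans I2).trans I3).trans J1.symm
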